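/- For every real number x with 0 < x and every natural number C with x ≤ C, one has ∑_{d=0}^{C} e^{−x} · (x^d / d!) · d ≥ x / e, where the sum ranges over the integers d = 0, 1, …, C. -/

import Mathlib

open Finset Real

private lemma hasDerivAt_S (n : ℕ) (t : ℝ) :
    HasDerivAt (fun s : ℝ => ∑ k ∈ Finset.range (n+1), s ^ k / (Nat.factorial k))
      (∑ k ∈ Finset.range n, t ^ k / (Nat.factorial k)) t := by
  have h : HasDerivAt (fun s : ℝ => ∑ k ∈ Finset.range (n+1), s ^ k / (Nat.factorial k))
      (∑ k ∈ Finset.range (n+1), (k : ℝ) * t ^ (k-1) / (Nat.factorial k)) t := by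
    apply HasDerivAt.fun_sum
    intro k _
    simpa [div_eq_mul_inv] using (hasDerivAt_pow k t).mul_const ((Nat.factorial k : ℝ)⁻¹)
  convert h using 1
  rw [Finset.sum_range_succ']
  simp only [Nat.cast_zero, zero_mul, Nat.factorial_zero, Nat.cast_one, zero_div, add_zero]
  apply Finset.sum_congr rfl
  intro k _
  have hfac : ((k+1).factorial : ℝ) = ((k:ℝ)+1) * (k.factorial : ℝ) := by
    rw [Nat.factorial_succ]; push_cast; ring
  have hk : ((k:ℝ)+1) ≠ 0 := by positivity
  have hf : (k.factorial : ℝ) ≠ 0 := by positivity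
  rw [hfac]
  push_cast
  field_simp

private lemma hasDerivAt_F (n : ℕ) (t : ℝ) :
    HasDerivAt (fun s : ℝ => Real.exp (-s) * ∑ k ∈ Finset.range (n+1), s ^ k / (Nat.factorial k))
      (-(Real.exp (-t) * t ^ n / (Nat.factorial n))) t := by
  have hexp : HasDerivAt (fun s : ℝ => Real.exp (-s)) (-Real.exp (-t)) t := by
    exact ((hasDerivAt_neg t).exp).congr_deriv (by ring)
  have h := hexp.mul (hasDerivAt_S n t)
  exact h.congr_deriv (by rw [Finset.sum_range_succ]; ring)

private lemma contF (n : ℕ) :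
    Continuous (fun s : ℝ => Real.exp (-s) * ∑ k ∈ Finset.range (n+1), s ^ k / (Nat.factorial k)) :=
  (Real.continuous_exp.comp continuous_neg).mul
    (continuous_finset_sum _ fun i _ => (continuous_pow i).div_const _)

private lemma decay (n : ℕ) (t : ℝ) (hn : 1 ≤ n) (ht : (n:ℝ) ≤ t) :
    Real.exp (-t) * t ^ n ≤ Real.exp (-(n:ℝ)) * (n:ℝ) ^ n := by
  have hn0 : (0:ℝ) < n := by exact_mod_cast Nat.pos_of_ne_zero (by omega)
  have ht0 : (0:ℝ) ≤ t := le_trans hn0.le ht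
  have h1 : t / n ≤ Real.exp ((t - n)/n) := by
    have := Real.add_one_le_exp ((t - n)/n)
    calc t / n = (t - n)/n + 1 := by field_simp; ring
    _ ≤ Real.exp ((t - n)/n) := this
  have h2 : (t / n) ^ n ≤ Real.exp ((t - n)/n) ^ n :=
    pow_le_pow_left₀ (div_nonneg ht0 hn0.le) h1 n
  have h3 : Real.exp ((t - n)/n) ^ n = Real.exp (t - n) := by
    rw [← Real.exp_nat_mul]
    congr 1
    field_simp
  have h4 : t ^ n ≤ (n:ℝ) ^ n * Real.exp (t - n) := by
    rw [h3] at h2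
    have := mul_le_mul_of_nonneg_left h2 (le_of_lt (pow_pos hn0 n))
    calc t ^ n = (n:ℝ)^n * (t/n)^n := by rw [div_pow]; field_simp
    _ ≤ (n:ℝ)^n * Real.exp (t - n) := this
  have h5 : Real.exp (-t) * Real.exp (t - n) = Real.exp (-(n:ℝ)) := by
    rw [← Real.exp_add]; congr 1; ring
  calc Real.exp (-t) * t ^ n ≤ Real.exp (-t) * ((n:ℝ)^n * Real.exp (t-n)) :=
        mul_le_mul_of_nonneg_left h4 (le_of_lt (Real.exp_pos _))
  _ = (n:ℝ)^n * (Real.exp (-t) * Real.exp (t-n)) := by ring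
  _ = Real.exp (-(n:ℝ)) * (n:ℝ)^n := by rw [h5]; ring

private lemma key (n : ℕ) :
    Real.exp (-1) ≤ Real.exp (-((n:ℝ)+1)) *
      ∑ k ∈ Finset.range (n+1), ((n:ℝ)+1) ^ k / (Nat.factorial k) := by
  induction n with
  | zero => simp
  | succ n ih =>
    set m : ℕ := n + 1 with hm
    have hmR : ((n:ℝ)+1) = (m:ℝ) := by rw [hm]; push_cast; ring
    set c : ℝ := Real.exp (-(m:ℝ)) * (m:ℝ) ^ m / (Nat.factorial m) with hc
    have hc0 : 0 ≤ c := by positivity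
    have hderiv : ∀ t : ℝ, HasDerivAt
        (fun s : ℝ => Real.exp (-s) * (∑ k ∈ Finset.range (m+1), s ^ k / (Nat.factorial k)) + c * s)
        (-(Real.exp (-t) * t ^ m / (Nat.factorial m)) + c) t := by
      intro t
      exact ((hasDerivAt_F m t).add ((hasDerivAt_id t).const_mul c)).congr_deriv (by ring)
    have hmono : MonotoneOn
        (fun s : ℝ => Real.exp (-s) * (∑ k ∈ Finset.range (m+1), s ^ k / (Nat.factorial k)) + c * s)
        (Set.Ici (m:ℝ)) := by
      apply monotoneOn_of_deriv_nonneg (convex_Ici _)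
      · exact ((contF m).add (continuous_const.mul continuous_id)).continuousOn
      · intro t _
        exact (hderiv t).differentiableAt.differentiableWithinAt
      · intro t ht
        simp only [interior_Ici, Set.mem_Ioi] at ht
        rw [(hderiv t).deriv]
        have hb : Real.exp (-t) * t ^ m ≤ Real.exp (-(m:ℝ)) * (m:ℝ) ^ m :=
          decay m t (by omega) (le_of_lt ht)
        have : Real.exp (-t) * t ^ m / (Nat.factorial m) ≤ c := by
          rw [hc]
          exact div_le_div_of_nonneg_right hb (by positivity)
        linarith
    have hφ := hmono (Set.self_mem_Ici)
      (by simp only [Set.mem_Ici]; linarith : ((m:ℝ)+1) ∈ Set.Ici (m:ℝ))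
      (by linarith : (m:ℝ) ≤ (m:ℝ)+1)
    simp only at hφ
    have hsplit : Real.exp (-(m:ℝ)) * (∑ k ∈ Finset.range (m+1), (m:ℝ) ^ k / (Nat.factorial k))
        = Real.exp (-(m:ℝ)) * (∑ k ∈ Finset.range m, (m:ℝ) ^ k / (Nat.factorial k)) + c := by
      rw [Finset.sum_range_succ, hc]; ring
    have ihm : Real.exp (-1) ≤ Real.exp (-(m:ℝ)) *
        ∑ k ∈ Finset.range m, (m:ℝ) ^ k / (Nat.factorial k) := by
      rw [← hmR]; exact ih
    linarith
/-- for `0 < x ≤ C`,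
`∑_{d=0}^{C} e^{-x} (x^d / d!) d ≥ x / e`. -/
theorem poisson_truncated_first_moment_ge
    (x : ℝ) (C : ℕ) (hx : 0 < x) (hxC : x ≤ C) :
    x / Real.exp 1 ≤
      ∑ d ∈ Finset.range (C + 1),
        Real.exp (-x) * (x ^ d / Nat.factorial d) * d := by
  obtain ⟨m, rfl⟩ : ∃ m, C = m + 1 := by
    refine ⟨C - 1, ?_⟩
    have : C ≠ 0 := by
      rintro rfl; simp at hxC; linarith
    omega
  have hsum : ∑ d ∈ Finset.range (m + 1 + 1),
        Real.exp (-x) * (x ^ d / Nat.factorial d) * d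
      = x * (Real.exp (-x) * ∑ k ∈ Finset.range (m+1), x ^ k / (Nat.factorial k)) := by
    rw [Finset.sum_range_succ', Finset.mul_sum, Finset.mul_sum]
    simp only [Nat.cast_zero, mul_zero, add_zero]
    apply Finset.sum_congr rfl
    intro k _
    have hfac : ((k+1).factorial : ℝ) = ((k:ℝ)+1) * (k.factorial : ℝ) := by
      rw [Nat.factorial_succ]; push_cast; ring
    have hk : ((k:ℝ)+1) ≠ 0 := by positivity
    have hf : (k.factorial : ℝ) ≠ 0 := by positivity
    rw [hfac]
    push_cast
    field_simp
    ring
  rw [hsum]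
  have hanti : AntitoneOn
      (fun s : ℝ => Real.exp (-s) * ∑ k ∈ Finset.range (m+1), s ^ k / (Nat.factorial k))
      (Set.Ici (0:ℝ)) := by
    apply antitoneOn_of_deriv_nonpos (convex_Ici _)
    · exact (contF m).continuousOn
    · intro t _
      exact (hasDerivAt_F m t).differentiableAt.differentiableWithinAt
    · intro t ht
      simp only [interior_Ici, Set.mem_Ioi] at ht
      rw [(hasDerivAt_F m t).deriv]
      have : 0 ≤ Real.exp (-t) * t ^ m / (Nat.factorial m) := by positivity
      linarith
  have hxmem : x ∈ Set.Ici (0:ℝ) := le_of_lt hx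
  have hCmem : ((m:ℝ)+1) ∈ Set.Ici (0:ℝ) := by simp only [Set.mem_Ici]; positivity
  have hxC' : x ≤ (m:ℝ)+1 := by push_cast at hxC; linarith
  have h1 := hanti hxmem hCmem hxC'
  simp only at h1
  have h2 := key m
  have h3 : Real.exp (-1) ≤ Real.exp (-x) * ∑ k ∈ Finset.range (m+1), x ^ k / (Nat.factorial k) :=
    le_trans h2 h1
  have h4 : x * Real.exp (-1) ≤
      x * (Real.exp (-x) * ∑ k ∈ Finset.range (m+1), x ^ k / (Nat.factorial k)) :=
    mul_le_mul_of_nonneg_left h3 (le_of_lt hx)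
  calc x / Real.exp 1 = x * Real.exp (-1) := by rw [Real.exp_neg]; ring
  _ ≤ _ := h4
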